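/- Under the hypotheses on ξ above (ξ(y₀) = 0, ξ, ξ' > 0 on (y₀,∞), ξ'' ≤ 0 on [y₀,y₂], ξ'' > 0 on (y₂,∞)), suppose for each K ≥ 0 that F_K(y) = ξ(y) − (y − y₀ − K)ξ'(y) has a unique root ŷ_K lying in [max{y₀+K, y₂}, ∞). Then the map K ↦ ŷ_K is strictly increasing: for 0 ≤ K₁ < K₂ one has ŷ_{K₁} < ŷ_{K₂}. -/

import Mathlib

open Set

theorem stmt2 (y₀ y₂ : ℝ) (hy₀ : 0 < y₀) (hy₂ : y₀ ≤ y₂)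
    (ξ ξ' ξ'' : ℝ → ℝ)
    (hd1 : ∀ y ∈ Ici y₀, HasDerivAt ξ (ξ' y) y)
    (hd2 : ∀ y ∈ Ici y₀, HasDerivAt ξ' (ξ'' y) y)
    (hξ0 : ξ y₀ = 0)
    (hξpos : ∀ y > y₀, 0 < ξ y)
    (hξ'pos : ∀ y > y₀, 0 < ξ' y)
    (hconc : ∀ y ∈ Icc y₀ y₂, ξ'' y ≤ 0)
    (hconv : ∀ y > y₂, 0 < ξ'' y)
    (yhat : ℝ → ℝ)
    (hroot : ∀ K ≥ (0:ℝ), ξ (yhat K) - (yhat K - y₀ - K) * ξ' (yhat K) = 0)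
    (hloc : ∀ K ≥ (0:ℝ), max (y₀ + K) y₂ ≤ yhat K)
    (huniq : ∀ K ≥ (0:ℝ), ∀ y ∈ Ioi y₀, ξ y - (y - y₀ - K) * ξ' y = 0 → y = yhat K) :
    ∀ K₁ K₂ : ℝ, 0 ≤ K₁ → K₁ < K₂ → yhat K₁ < yhat K₂ := by
  intro K₁ K₂ hK₁ hK
  have hK₂ : (0:ℝ) ≤ K₂ := le_of_lt (lt_of_le_of_lt hK₁ hK)
  have hbloc := hloc K₂ hK₂
  have haloc := hloc K₁ hK₁
  set a := yhat K₁ with ha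
  set b := yhat K₂ with hb
  have hby₀ : y₀ ≤ b := le_trans hy₂ (le_trans (le_max_right _ _) hbloc)
  by_cases hgt : y₀ < a
  · -- main case
    have hFb : ξ b - (b - y₀ - K₂) * ξ' b = 0 := hroot K₂ hK₂
    have hFa : 0 < ξ a - (a - y₀ - K₂) * ξ' a := by
      have h1 := hroot K₁ hK₁
      have h2 : 0 < ξ' a := hξ'pos a hgt
      nlinarith
    by_contra hle
    push_neg at hle  -- b ≤ a
    have hanti : StrictAntiOn (fun y => ξ y - (y - y₀ - K₂) * ξ' y) (Ici b) := by
      have hder : ∀ y ∈ Ici b, HasDerivAt (fun y => ξ y - (y - y₀ - K₂) * ξ' y)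
          (-(y - y₀ - K₂) * ξ'' y) y := by
        intro y hy
        have hyy₀ : y₀ ≤ y := le_trans hby₀ hy
        have h1 := hd1 y hyy₀
        have h2 := hd2 y hyy₀
        have h3 : HasDerivAt (fun y => (y - y₀ - K₂) * ξ' y)
            (1 * ξ' y + (y - y₀ - K₂) * ξ'' y) y := by
          exact (((hasDerivAt_id y).sub_const y₀).sub_const K₂).mul h2
        have := h1.sub h3
        rw [show -(y - y₀ - K₂) * ξ'' y = ξ' y - (1 * ξ' y + (y - y₀ - K₂) * ξ'' y) by ring]
        exact this
      apply strictAntiOn_of_deriv_neg (convex_Ici b)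
      · exact fun y hy => (hder y hy).continuousAt.continuousWithinAt
      · intro y hy
        rw [interior_Ici] at hy
        have hy' : b < y := hy
        rw [(hder y (le_of_lt hy')).deriv]
        have h2 : y₂ < y := lt_of_le_of_lt (le_trans (le_max_right _ _) hbloc) hy'
        have h3 : y₀ + K₂ < y := lt_of_le_of_lt (le_trans (le_max_left _ _) hbloc) hy'
        nlinarith [hconv y h2]
    have hab : b < a := lt_of_le_of_ne hle (by
      intro h
      rw [← h] at hFa
      linarith)
    have := hanti (self_mem_Ici) (mem_Ici.mpr hle) hab
    simp only [hFb] at this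
    linarith
  · -- a ≤ y₀; then b ≥ y₀ + K₂ > y₀ ≥ a
    push_neg at hgt
    have h1 : y₀ + K₂ ≤ b := le_trans (le_max_left _ _) hbloc
    have h2 : 0 < K₂ := lt_of_le_of_lt hK₁ hK
    linarith
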